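/- Let V be a set and F : P(V) → P(V) an anti-monotone function. Suppose κ₁ ≤ κ₂ < ρ are infinite cardinals and |F(X)| ≤ ρ for every X ⊆ V with |X| = κ₁. Let K be the operator assigning to each A ⊆ V the smallest F_{κ₂}-closed subset of V containing A. If θ ≥ ρ is a cardinal satisfying D(θ,κ₁,κ₂) = θ, then |K(A)| = θ for every A ⊆ V with |A| = θ. -/

import Mathlib

open Cardinal

/-- A family `D` of subsets of `α` is dense in `[α]^{κ₂}`. -/
def IsDenseIn {α : Type u} (D : Set (Set α)) (κ₂ : Cardinal.{u}) : Prop :=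
  ∀ Y : Set α, #Y = κ₂ → ∃ Z ∈ D, Z ⊆ Y

/-- The density `D(λ,κ₁,κ₂)`. -/
noncomputable def Density (l κ₁ κ₂ : Cardinal.{u}) : Cardinal.{u} :=
  sInf { c : Cardinal.{u} | ∃ D : Set (Set l.out),
    (∀ X ∈ D, #X = κ₁) ∧ IsDenseIn D κ₂ ∧ c = #D }

/-- `F` is anti-monotone: `A ⊆ B` implies `F B ⊆ F A`. -/
def AntiMonotone {α : Type u} (F : Set α → Set α) : Prop :=
  ∀ A B : Set α, A ⊆ B → F B ⊆ F A

/-- `D` is `F_κ`-closed: `F Y ⊆ D` for every `Y ⊆ D` of cardinality `κ`. -/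
def FClosed {α : Type u} (F : Set α → Set α) (κ : Cardinal.{u}) (D : Set α) : Prop :=
  ∀ Y ⊆ D, #Y = κ → F Y ⊆ D

/-- The smallest `F_κ`-closed set containing `A`: the intersection of all
`F_κ`-closed sets containing `A`. -/
def FClosure {α : Type u} (F : Set α → Set α) (κ : Cardinal.{u}) (A : Set α) : Set α :=
  ⋂₀ { D : Set α | A ⊆ D ∧ FClosed F κ D }


section AuxClosure
open Set
variable {α β : Type}

noncomputable def pullb (S : Set α) (f : ↥S ↪ β) (Z : Set β) : Set α :=
  Subtype.val '' (f ⁻¹' Z)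

open Classical in
noncomputable def stepF (F : Set α → Set α) (κ₁ : Cardinal.{0}) (D : Set (Set β)) (S : Set α) :
    Set α :=
  if h : Nonempty (↥S ↪ β) then
    S ∪ ⋃ Z ∈ D, ⋃ (_ : #(pullb S (Classical.choice h) Z) = κ₁),
      F (pullb S (Classical.choice h) Z)
  else S

noncomputable def chainF (F : Set α → Set α) (κ₁ : Cardinal.{0}) (D : Set (Set β)) (A : Set α)
    (o : Ordinal.{0}) : Set α :=
  A ∪ ⋃ b : {b : Ordinal.{0} // b < o}, stepF F κ₁ D (chainF F κ₁ D A b.1)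
termination_by o
decreasing_by exact b.2

variable {F : Set α → Set α} {κ₁ κ₂ ρ : Cardinal.{0}} {D : Set (Set β)} {A S : Set α}

open Classical in
theorem subset_stepF : S ⊆ stepF F κ₁ D S := by
  unfold stepF; split
  · exact subset_union_left
  · exact subset_rfl

theorem chainF_eq (o : Ordinal.{0}) : chainF F κ₁ D A o =
    A ∪ ⋃ b : {b : Ordinal.{0} // b < o}, stepF F κ₁ D (chainF F κ₁ D A b.1) := by
  rw [chainF]

theorem subset_chainF (o : Ordinal.{0}) : A ⊆ chainF F κ₁ D A o := by
  rw [chainF_eq]; exact subset_union_left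

theorem stepF_chainF_subset {b o : Ordinal.{0}} (h : b < o) :
    stepF F κ₁ D (chainF F κ₁ D A b) ⊆ chainF F κ₁ D A o := by
  rw [chainF_eq o]
  exact subset_union_of_subset_right
    (Set.subset_iUnion (fun c : {b' : Ordinal.{0} // b' < o} => stepF F κ₁ D (chainF F κ₁ D A c.1))
      ⟨b, h⟩) _

theorem chainF_mono {b o : Ordinal.{0}} (h : b ≤ o) :
    chainF F κ₁ D A b ⊆ chainF F κ₁ D A o := by
  rw [chainF_eq b]
  refine union_subset (subset_chainF o) (iUnion_subset fun c => ?_)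
  exact stepF_chainF_subset (lt_of_lt_of_le c.2 h)

open Classical in
theorem stepF_card (hbound : ∀ X : Set α, #X = κ₁ → #(F X) ≤ ρ) :
    #(stepF F κ₁ D S) ≤ #S + #D * ρ := by
  unfold stepF; split
  · refine (mk_union_le _ _).trans (add_le_add le_rfl ?_)
    refine (mk_biUnion_le _ _).trans (mul_le_mul' le_rfl (ciSup_le' fun Z => ?_))
    by_cases h : #(pullb S (Classical.choice ‹_›) Z.1) = κ₁
    · rw [Set.iUnion_eq_if, if_pos h]; exact hbound _ h
    · rw [Set.iUnion_eq_if, if_neg h]; simp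
  · exact le_self_add

theorem chainF_card {θ : Cardinal.{0}} (hθ : ℵ₀ ≤ θ) (hA : #A ≤ θ) (hD : #D ≤ θ) (hρ : ρ ≤ θ)
    (hbound : ∀ X : Set α, #X = κ₁ → #(F X) ≤ ρ) :
    ∀ o : Ordinal.{0}, o.card ≤ θ → #(chainF F κ₁ D A o) ≤ θ := by
  intro o
  induction o using Ordinal.induction with
  | _ o IH =>
    intro ho
    have hDρ : #D * ρ ≤ θ := by
      calc #D * ρ ≤ θ * θ := mul_le_mul' hD hρ
        _ = θ := mul_eq_self hθ
    rw [chainF_eq]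
    refine (mk_union_le _ _).trans (add_le_of_le hθ hA ?_)
    have key : (⋃ b : {b : Ordinal.{0} // b < o}, stepF F κ₁ D (chainF F κ₁ D A b.1)) =
        ⋃ i : o.ToType, stepF F κ₁ D (chainF F κ₁ D A ((Ordinal.ToType.mk (o := o)).symm i).1) := by
      ext x
      simp only [mem_iUnion]
      constructor
      · rintro ⟨b, hb⟩
        refine ⟨Ordinal.ToType.mk (o := o) ⟨b.1, b.2⟩, ?_⟩
        rwa [OrderIso.symm_apply_apply]
      · rintro ⟨i, hi⟩
        exact ⟨⟨_, ((Ordinal.ToType.mk (o := o)).symm i).2⟩, hi⟩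
    rw [key]
    refine (mk_iUnion_le _).trans ?_
    have h1 : #o.ToType ≤ θ := by rw [Cardinal.mk_toType]; exact ho
    have h2 : (⨆ i : o.ToType,
        #(stepF F κ₁ D (chainF F κ₁ D A ((Ordinal.ToType.mk (o := o)).symm i).1))) ≤ θ := by
      refine ciSup_le' fun i => ?_
      have hb := ((Ordinal.ToType.mk (o := o)).symm i).2
      refine (stepF_card hbound).trans (add_le_of_le hθ ?_ hDρ)
      exact IH _ hb ((Ordinal.card_le_card hb.le).trans ho)
    calc _ ≤ θ * θ := mul_le_mul' h1 h2
      _ = θ := mul_eq_self hθ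

open Classical in
theorem stepF_closed (hF : AntiMonotone F) (hD1 : ∀ X ∈ D, #X = κ₁) (hdense : IsDenseIn D κ₂)
    (hemb : Nonempty (↥S ↪ β)) {Y : Set α} (hYS : Y ⊆ S) (hY : #Y = κ₂) :
    F Y ⊆ stepF F κ₁ D S := by
  set f := Classical.choice hemb with hf
  have hY' : #(f '' (Subtype.val ⁻¹' Y)) = κ₂ := by
    rw [mk_image_eq f.injective,
      mk_preimage_of_injective_of_subset_range _ _ Subtype.val_injective
        (by rw [Subtype.range_val]; exact hYS)]
    exact hY
  obtain ⟨Z, hZD, hZY⟩ := hdense _ hY'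
  have hsub : pullb S f Z ⊆ Y := by
    rintro x ⟨x', hx', rfl⟩
    obtain ⟨y, hy, hyx⟩ := hZY hx'
    have hyy : y = x' := f.injective hyx
    subst hyy; exact hy
  have hcard : #(pullb S f Z) = κ₁ := by
    rw [pullb, mk_image_eq Subtype.val_injective,
      mk_preimage_of_injective_of_subset_range _ _ f.injective
        (hZY.trans (image_subset_range _ _))]
    exact hD1 Z hZD
  intro x hx
  unfold stepF
  rw [dif_pos hemb]
  exact Or.inr (mem_iUnion₂.2 ⟨Z, hZD, mem_iUnion.2 ⟨hcard, hF _ _ hsub hx⟩⟩)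

theorem mem_chainF_bounded {o : Ordinal.{0}} (ho : Order.IsSuccLimit o) {x : α}
    (hx : x ∈ chainF F κ₁ D A o) : ∃ b < o, x ∈ chainF F κ₁ D A b := by
  rw [chainF_eq] at hx
  rcases hx with hx | hx
  · exact ⟨0, ho.pos, subset_chainF 0 hx⟩
  · obtain ⟨b, hb⟩ := mem_iUnion.1 hx
    exact ⟨b.1 + 1, ho.succ_lt b.2, stepF_chainF_subset (Order.lt_succ _) hb⟩
end AuxClosure

theorem closure_cardinality {α : Type} (F : Set α → Set α) (hF : AntiMonotone F)
    (κ₁ κ₂ ρ : Cardinal.{0}) (hκ₁ : ℵ₀ ≤ κ₁) (h12 : κ₁ ≤ κ₂) (h2ρ : κ₂ < ρ)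
    (hbound : ∀ X : Set α, #X = κ₁ → #(F X) ≤ ρ)
    (θ : Cardinal.{0}) (hθ : ρ ≤ θ) (hdens : Density θ κ₁ κ₂ = θ) :
    ∀ A : Set α, #A = θ → #(FClosure F κ₂ A) = θ := by
  intro A hA
  have hℵ2 : ℵ₀ ≤ κ₂ := hκ₁.trans h12
  have hℵθ : ℵ₀ ≤ θ := hℵ2.trans (h2ρ.le.trans hθ)
  -- extract a dense family
  have hne : {c : Cardinal.{0} | ∃ D : Set (Set θ.out),
      (∀ X ∈ D, #X = κ₁) ∧ IsDenseIn D κ₂ ∧ c = #D}.Nonempty := by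
    refine ⟨#({Z : Set θ.out | #Z = κ₁} : Set (Set θ.out)),
      {Z : Set θ.out | #Z = κ₁}, fun X hX => hX, fun Y hY => ?_, rfl⟩
    obtain ⟨p, hp, hpcard⟩ := Cardinal.le_mk_iff_exists_subset.1 (hY ▸ h12)
    exact ⟨p, hpcard, hp⟩
  unfold Density at hdens
  obtain ⟨D, hD1, hDdense, hDcard⟩ : ∃ D : Set (Set θ.out),
      (∀ X ∈ D, #X = κ₁) ∧ IsDenseIn D κ₂ ∧ θ = #D := by
    have h0 := csInf_mem hne
    rw [hdens] at h0
    exact h0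
  -- the chain of length (succ κ₂).ord
  set lc : Cardinal.{0} := Order.succ κ₂ with hlc
  set lo : Ordinal.{0} := lc.ord with hlo
  have hlcρ : lc ≤ ρ := Order.succ_le_of_lt h2ρ
  have hlcθ : lc ≤ θ := hlcρ.trans hθ
  have hAθ : #A ≤ θ := hA.le
  have hDθ : #D ≤ θ := hDcard.ge
  have hcard : ∀ b : Ordinal.{0}, b ≤ lo → #(chainF F κ₁ D A b) ≤ θ := by
    intro b hb
    refine chainF_card hℵθ hAθ hDθ hθ hbound b ?_
    exact (Ordinal.card_le_card hb).trans (by rw [hlo, Cardinal.card_ord]; exact hlcθ)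
  have hemb : ∀ b : Ordinal.{0}, b ≤ lo →
      Nonempty (↥(chainF F κ₁ D A b) ↪ θ.out) := by
    intro b hb
    have : #(chainF F κ₁ D A b) ≤ #θ.out := by rw [mk_out]; exact hcard b hb
    exact Cardinal.le_def _ _ |>.1 this
  have hlimit : Order.IsSuccLimit lo := Cardinal.isSuccLimit_ord (hℵ2.trans (Order.le_succ κ₂))
  have hclosed : FClosed F κ₂ (chainF F κ₁ D A lo) := by
    intro Y hYsub hYcard
    choose g hg1 hg2 using fun y : ↥Y => mem_chainF_bounded hlimit (hYsub y.2)
    have hb : (⨆ y : ↥Y, g y) < lo := by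
      refine Ordinal.iSup_lt_ord ?_ hg1
      rw [hYcard, hlo, (Cardinal.isRegular_succ hℵ2).cof_eq]
      exact Order.lt_succ κ₂
    have hYb : Y ⊆ chainF F κ₁ D A (⨆ y : ↥Y, g y) := by
      intro y hy
      exact chainF_mono (Ordinal.le_iSup g ⟨y, hy⟩) (hg2 ⟨y, hy⟩)
    refine (stepF_closed hF hD1 hDdense (hemb _ hb.le) hYb hYcard).trans
      (stepF_chainF_subset hb)
  have hsub : FClosure F κ₂ A ⊆ chainF F κ₁ D A lo :=
    Set.sInter_subset_of_mem ⟨subset_chainF lo, hclosed⟩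
  refine le_antisymm ((mk_le_mk_of_subset hsub).trans (hcard lo le_rfl)) ?_
  rw [← hA]
  exact mk_le_mk_of_subset (Set.subset_sInter fun Dset hDset => hDset.1)
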